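/- arXiv:2512.17635 — 2 statements merged into one kernel-verified Lean document; each statement's English description precedes it below -/
import Mathlib

section
/- Pick-freeze covariance identity for closed Sobol' indices: let X = (X_u, X_{-u}) have independent components, let X' be an independent copy of X, set Y = f(X) and Y^u = f(X_u, X'_{-u}) for a square-integrable function f. Then Cov(Y, Y^u) = Var(E[f(X) | X_u]). -/
open MeasureTheory ProbabilityTheory

private lemma memLp_mul_integrable {α : Type*} [MeasurableSpace α] {μ : Measure α} {f g : α → ℝ}
    (hf : MemLp f 2 μ) (hg : MemLp g 2 μ) : Integrable (fun x => f x * g x) μ := by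
  rw [← memLp_one_iff_integrable]
  have h := hg.smul (φ := f) hf (p := 2) (q := 2) (r := 1)
  simpa [smul_eq_mul, Pi.mul_def] using h

private lemma variance_congr_ae {Ω : Type*} [MeasurableSpace Ω] {μ : Measure Ω} {X Y : Ω → ℝ}
    (h : X =ᵐ[μ] Y) : variance X μ = variance Y μ := by
  have hm : (∫ ω, X ω ∂μ) = ∫ ω, Y ω ∂μ := integral_congr_ae h
  unfold ProbabilityTheory.variance ProbabilityTheory.evariance
  congr 1
  apply lintegral_congr_ae
  filter_upwards [h] with ω hω
  rw [hω, hm]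

/-- Jensen/Cauchy-Schwarz: the partial integral of an L² function is L². -/
private lemma memLp_integral_prod_right {A B : Type*} [MeasurableSpace A] [MeasurableSpace B]
    {μa : Measure A} {μb : Measure B} [SFinite μa] [IsProbabilityMeasure μb]
    {f : A × B → ℝ} (hf : MemLp f 2 (μa.prod μb)) :
    MemLp (fun a => ∫ b, f (a, b) ∂μb) 2 μa := by
  have hg : AEStronglyMeasurable (fun a => ∫ b, f (a, b) ∂μb) μa :=
    hf.1.integral_prod_right'
  rw [memLp_two_iff_integrable_sq hg]
  have hsq : Integrable (fun p => f p ^ 2) (μa.prod μb) := hf.integrable_sq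
  have hint : Integrable (fun a => ∫ b, f (a, b) ^ 2 ∂μb) μa := hsq.integral_prod_left
  have h2 : AEStronglyMeasurable (fun a => (∫ b, f (a, b) ∂μb) ^ 2) μa := by
    simpa [pow_two, Pi.mul_def] using hg.mul hg
  refine hint.mono' h2 ?_
  filter_upwards [hsq.prod_right_ae, hf.1.prodMk_left] with a ha hma
  have hX : MemLp (fun b => f (a, b)) 2 μb := (memLp_two_iff_integrable_sq hma).2 ha
  have hv := variance_nonneg (fun b => f (a, b)) μb
  rw [variance_eq_sub hX] at hv
  rw [Real.norm_eq_abs, abs_of_nonneg (sq_nonneg _)]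
  have h3 := sub_nonneg.1 hv
  simpa [pow_two] using h3

private lemma pick_freeze_core {A B : Type*}
    [MeasurableSpace A] [MeasurableSpace B]
    (μa : Measure A) (μb : Measure B)
    [IsProbabilityMeasure μa] [IsProbabilityMeasure μb]
    (f : A × B → ℝ) (hf : MemLp f 2 (μa.prod μb)) (hfm : StronglyMeasurable f) :
    (∫ ω : (A × B) × (A × B),
        (f ω.1 - ∫ ω' : (A × B) × (A × B), f ω'.1 ∂((μa.prod μb).prod (μa.prod μb))) *
        (f (ω.1.1, ω.2.2) -
          ∫ ω' : (A × B) × (A × B), f (ω'.1.1, ω'.2.2) ∂((μa.prod μb).prod (μa.prod μb)))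
        ∂((μa.prod μb).prod (μa.prod μb)))
      = variance (fun a : A => ∫ b, f (a, b) ∂μb) μa := by
  set ν : Measure (A × B) := μa.prod μb with hν
  set π : Measure ((A × B) × (A × B)) := ν.prod ν with hπ
  set m : ℝ := ∫ x, f x ∂ν with hm
  have hT : Measurable (fun ω : (A × B) × (A × B) => (ω.1.1, ω.2.2)) :=
    (measurable_fst.comp measurable_fst).prodMk (measurable_snd.comp measurable_snd)
  have hmapfst : π.map Prod.fst = ν := by
    rw [hπ, Measure.map_fst_prod]; simp
  have hmapT : π.map (fun ω : (A × B) × (A × B) => (ω.1.1, ω.2.2)) = ν := by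
    have h1 : (fun ω : (A × B) × (A × B) => (ω.1.1, ω.2.2)) =
        Prod.map (Prod.fst : A × B → A) (Prod.snd : A × B → B) := rfl
    rw [h1, hπ, ← Measure.map_prod_map _ _ measurable_fst measurable_snd]
    rw [hν, Measure.map_fst_prod, Measure.map_snd_prod]
    simp
  have mpfst : MeasurePreserving (Prod.fst : (A × B) × (A × B) → A × B) π ν :=
    ⟨measurable_fst, hmapfst⟩
  have mpT : MeasurePreserving (fun ω : (A × B) × (A × B) => (ω.1.1, ω.2.2)) π ν :=
    ⟨hT, hmapT⟩
  have m1 : (∫ ω : (A × B) × (A × B), f ω.1 ∂π) = m := by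
    rw [hm, ← hmapfst, integral_map measurable_fst.aemeasurable (by rw [hmapfst]; exact hf.1)]
  have m2 : (∫ ω : (A × B) × (A × B), f (ω.1.1, ω.2.2) ∂π) = m := by
    rw [hm, ← hmapT, integral_map hT.aemeasurable (by rw [hmapT]; exact hf.1)]
  rw [m1, m2]
  have hf1 : MemLp (fun ω : (A × B) × (A × B) => f ω.1) 2 π :=
    hf.comp_measurePreserving mpfst
  have hf2 : MemLp (fun ω : (A × B) × (A × B) => f (ω.1.1, ω.2.2)) 2 π :=
    hf.comp_measurePreserving mpT
  have hF1 : MemLp (fun ω : (A × B) × (A × B) => f ω.1 - m) 2 π :=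
    hf1.sub (memLp_const m)
  have hF2 : MemLp (fun ω : (A × B) × (A × B) => f (ω.1.1, ω.2.2) - m) 2 π :=
    hf2.sub (memLp_const m)
  have hInt : Integrable
      (fun ω : (A × B) × (A × B) => (f ω.1 - m) * (f (ω.1.1, ω.2.2) - m)) π :=
    memLp_mul_integrable hF1 hF2
  rw [hπ] at hInt ⊢
  rw [integral_prod _ hInt]
  -- inner integral computation
  set G : A → ℝ := fun a => ∫ b, (f (a, b) - m) ∂μb with hG
  have hinner : ∀ x : A × B,
      (∫ y : A × B, (f x - m) * (f (x.1, y.2) - m) ∂ν) = (f x - m) * G x.1 := by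
    intro x
    rw [integral_const_mul]
    congr 1
    have hsm : AEStronglyMeasurable (fun b : B => f (x.1, b) - m) (ν.map Prod.snd) :=
      ((hfm.comp_measurable measurable_prodMk_left).sub stronglyMeasurable_const
        ).aestronglyMeasurable
    have hmsnd : ν.map Prod.snd = μb := by rw [hν, Measure.map_snd_prod]; simp
    have heq : (∫ b, (f (x.1, b) - m) ∂μb) = ∫ y : A × B, (f (x.1, y.2) - m) ∂ν := by
      rw [← hmsnd, integral_map measurable_snd.aemeasurable hsm]
    simp only [hG]
    exact heq.symm
  simp_rw [hinner]
  -- outer step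
  have hGf : MemLp (fun p : A × B => f p - m) 2 ν := hf.sub (memLp_const m)
  have hGm : MemLp G 2 μa := memLp_integral_prod_right hGf
  have mpfst2 : MeasurePreserving (Prod.fst : A × B → A) ν μa :=
    ⟨measurable_fst, by rw [hν, Measure.map_fst_prod]; simp⟩
  have hInt2 : Integrable (fun x : A × B => (f x - m) * G x.1) ν :=
    memLp_mul_integrable hGf (hGm.comp_measurePreserving mpfst2)
  rw [hν] at hInt2
  rw [integral_prod _ hInt2]
  have hGsq : ∀ a : A, (∫ b, (f (a, b) - m) * G a ∂μb) = G a * G a := by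
    intro a
    rw [integral_mul_const]
  simp_rw [hGsq]
  -- identify with the variance
  have hg2 : MemLp (fun a : A => ∫ b, f (a, b) ∂μb) 2 μa := memLp_integral_prod_right hf
  have hgm : (∫ a, (∫ b, f (a, b) ∂μb) ∂μa) = m := by
    rw [hm, hν, integral_prod _ (hf.integrable one_le_two)]
  have hae : ∀ᵐ a ∂μa, G a = (∫ b, f (a, b) ∂μb) - m := by
    filter_upwards [(hf.integrable one_le_two).prod_right_ae] with a ha
    simp only [hG]
    rw [integral_sub ha (integrable_const m)]
    simp
  rw [variance_eq_integral hg2.1.aemeasurable]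
  apply integral_congr_ae
  filter_upwards [hae] with a ha
  simp only [Pi.pow_apply, Pi.sub_apply, ha, hgm, pow_two]

/-- Pick-freeze covariance identity: `Cov(Y, Y^u) = Var(E[f(X)|X_u])`.
The input `X = (X_u, X_{-u})` with independent components is modeled as the identity
on the product space `A × B` with product probability measure; the independent copy
`X'` lives on a second factor, so `Y(ω) = f ω.1` and `Y^u(ω) = f (ω.1.1, ω.2.2)`. -/
theorem pick_freeze_covariance_identity {A B : Type*}
    [MeasurableSpace A] [MeasurableSpace B]
    (μa : Measure A) (μb : Measure B)
    [IsProbabilityMeasure μa] [IsProbabilityMeasure μb]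
    (f : A × B → ℝ) (hf : MemLp f 2 (μa.prod μb)) :
    (∫ ω : (A × B) × (A × B),
        (f ω.1 - ∫ ω' : (A × B) × (A × B), f ω'.1 ∂((μa.prod μb).prod (μa.prod μb))) *
        (f (ω.1.1, ω.2.2) -
          ∫ ω' : (A × B) × (A × B), f (ω'.1.1, ω'.2.2) ∂((μa.prod μb).prod (μa.prod μb)))
        ∂((μa.prod μb).prod (μa.prod μb)))
      = variance (fun a : A => ∫ b, f (a, b) ∂μb) μa := by
  set ν : Measure (A × B) := μa.prod μb with hν
  set π : Measure ((A × B) × (A × B)) := ν.prod ν with hπ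
  set f' : A × B → ℝ := hf.1.mk f with hf'def
  have hff' : f =ᵐ[ν] f' := hf.1.ae_eq_mk
  have hf' : MemLp f' 2 ν := hf.ae_eq hff'
  have hf'm : StronglyMeasurable f' := hf.1.stronglyMeasurable_mk
  have hT : Measurable (fun ω : (A × B) × (A × B) => (ω.1.1, ω.2.2)) :=
    (measurable_fst.comp measurable_fst).prodMk (measurable_snd.comp measurable_snd)
  have hmapfst : π.map Prod.fst = ν := by
    rw [hπ, Measure.map_fst_prod]; simp
  have hmapT : π.map (fun ω : (A × B) × (A × B) => (ω.1.1, ω.2.2)) = ν := by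
    have h1 : (fun ω : (A × B) × (A × B) => (ω.1.1, ω.2.2)) =
        Prod.map (Prod.fst : A × B → A) (Prod.snd : A × B → B) := rfl
    rw [h1, hπ, ← Measure.map_prod_map _ _ measurable_fst measurable_snd]
    rw [hν, Measure.map_fst_prod, Measure.map_snd_prod]
    simp
  -- a.e. equalities of the compositions
  have hae1 : (fun ω : (A × B) × (A × B) => f ω.1) =ᵐ[π] fun ω => f' ω.1 :=
    ae_eq_comp measurable_fst.aemeasurable (by rw [hmapfst]; exact hff')
  have hae2 : (fun ω : (A × B) × (A × B) => f (ω.1.1, ω.2.2)) =ᵐ[π]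
      fun ω => f' (ω.1.1, ω.2.2) :=
    ae_eq_comp hT.aemeasurable (by rw [hmapT]; exact hff')
  have hm1 : (∫ ω : (A × B) × (A × B), f ω.1 ∂π) = ∫ ω : (A × B) × (A × B), f' ω.1 ∂π :=
    integral_congr_ae hae1
  have hm2 : (∫ ω : (A × B) × (A × B), f (ω.1.1, ω.2.2) ∂π)
      = ∫ ω : (A × B) × (A × B), f' (ω.1.1, ω.2.2) ∂π :=
    integral_congr_ae hae2
  have hLHS : (∫ ω : (A × B) × (A × B),
      (f ω.1 - ∫ ω' : (A × B) × (A × B), f ω'.1 ∂π) *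
      (f (ω.1.1, ω.2.2) - ∫ ω' : (A × B) × (A × B), f (ω'.1.1, ω'.2.2) ∂π) ∂π)
      = ∫ ω : (A × B) × (A × B),
      (f' ω.1 - ∫ ω' : (A × B) × (A × B), f' ω'.1 ∂π) *
      (f' (ω.1.1, ω.2.2) - ∫ ω' : (A × B) × (A × B), f' (ω'.1.1, ω'.2.2) ∂π) ∂π := by
    rw [← hm1, ← hm2]
    apply integral_congr_ae
    filter_upwards [hae1, hae2] with ω h1 h2
    rw [h1, h2]
  have hg : (fun a : A => ∫ b, f (a, b) ∂μb) =ᵐ[μa] fun a : A => ∫ b, f' (a, b) ∂μb := by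
    filter_upwards [Measure.ae_ae_of_ae_prod hff'] with a ha
    exact integral_congr_ae ha
  rw [hLHS, variance_congr_ae hg]
  exact pick_freeze_core μa μb f' hf' hf'm
end

section
/- Basis-derived sensitivity map formula: with pick-freeze coefficient samples a_k, b_k ∈ ℝ^p and basis matrix V ∈ ℝ^{p×L}, define the scalar output samples at dimension ℓ by y_k^{(ℓ)} = Σ_q a_{k,q} V_{q,ℓ} and y*_k^{(ℓ)} = Σ_q b_{k,q} V_{q,ℓ}. Then the scalar pick-freeze numerator (1/m) Σ_k y_k^{(ℓ)} y*_k^{(ℓ)} − ((1/(2m)) Σ_k (y_k^{(ℓ)}+y*_k^{(ℓ)}))² equals v_ℓᵀ M v_ℓ, where v_ℓ is the ℓ-th column of V and M = (1/(2m)) Σ_k (a_k b_kᵀ + b_k a_kᵀ) − f̂₀ f̂₀ᵀ, f̂₀ = (1/(2m)) Σ_k (a_k + b_k). -/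
open Matrix BigOperators Finset

theorem basis_derived_sensitivity_map (p L m : ℕ)
    (a b : Fin m → (Fin p → ℝ)) (V : Matrix (Fin p) (Fin L) ℝ)
    (y ystar : Fin m → Fin L → ℝ)
    (hy : ∀ k ℓ, y k ℓ = ∑ q : Fin p, a k q * V q ℓ)
    (hystar : ∀ k ℓ, ystar k ℓ = ∑ q : Fin p, b k q * V q ℓ)
    (f0 : Fin p → ℝ) (hf0 : f0 = (1 / (2 * (m : ℝ))) • ∑ k : Fin m, (a k + b k))
    (M : Matrix (Fin p) (Fin p) ℝ)
    (hM : M = (1 / (2 * (m : ℝ))) •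
        (∑ k : Fin m, (vecMulVec (a k) (b k) + vecMulVec (b k) (a k)))
      - vecMulVec f0 f0) :
    ∀ ℓ : Fin L,
      (1 / (m : ℝ)) * ∑ k : Fin m, y k ℓ * ystar k ℓ
        - ((1 / (2 * (m : ℝ))) * ∑ k : Fin m, (y k ℓ + ystar k ℓ)) ^ 2
      = (fun q => V q ℓ) ⬝ᵥ (M *ᵥ fun q => V q ℓ) := by
  intro ℓ
  set v : Fin p → ℝ := fun q => V q ℓ with hv
  have key : ∀ (x z : Fin p → ℝ),
      v ⬝ᵥ (vecMulVec x z *ᵥ v) = (∑ q, x q * v q) * (∑ q, z q * v q) := by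
    intro x z
    simp only [dotProduct, mulVec, vecMulVec_apply, Finset.mul_sum, Finset.sum_mul]
    rw [Finset.sum_comm]
    apply Finset.sum_congr rfl; intro i _
    apply Finset.sum_congr rfl; intro j _
    ring
  have hquad : ∀ (x : Fin p → ℝ), (∑ q, x q * v q) = x ⬝ᵥ v := by
    intro x; rfl
  subst hM
  rw [Matrix.sub_mulVec, dotProduct_sub, Matrix.smul_mulVec, dotProduct_smul]
  have hsum : (∑ k : Fin m, (vecMulVec (a k) (b k) + vecMulVec (b k) (a k))) *ᵥ v
      = ∑ k : Fin m, ((vecMulVec (a k) (b k)) *ᵥ v + (vecMulVec (b k) (a k)) *ᵥ v) := by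
    ext i
    simp [Matrix.mulVec, dotProduct, Matrix.sum_apply, Matrix.add_apply,
      Finset.sum_apply, Finset.sum_mul, Finset.sum_add_distrib, add_mul]
    congr 1
    all_goals exact Finset.sum_comm
  have hdsum : ∀ (w : Fin m → Fin p → ℝ), v ⬝ᵥ (∑ k, w k) = ∑ k, v ⬝ᵥ w k := by
    intro w
    simp only [dotProduct, Finset.sum_apply, Finset.mul_sum]
    rw [Finset.sum_comm]
  rw [hsum, hdsum]
  simp only [dotProduct_add, key]
  have hc : ∀ k, y k ℓ = ∑ q, a k q * v q := fun k => hy k ℓ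
  have hd : ∀ k, ystar k ℓ = ∑ q, b k q * v q := fun k => hystar k ℓ
  have hF : (∑ q, f0 q * v q) = (1 / (2 * (m : ℝ))) * ∑ k : Fin m, (y k ℓ + ystar k ℓ) := by
    subst hf0
    simp only [Pi.smul_apply, Finset.sum_apply, Pi.add_apply, smul_eq_mul, hc, hd,
      Finset.mul_sum, Finset.sum_mul, ← Finset.sum_add_distrib]
    rw [Finset.sum_comm]
    apply Finset.sum_congr rfl; intro k _
    apply Finset.sum_congr rfl; intro q _
    ring
  rw [hF]
  simp only [smul_eq_mul]
  have hrw : (∑ k : Fin m, ((∑ q, a k q * v q) * (∑ q, b k q * v q)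
      + (∑ q, b k q * v q) * (∑ q, a k q * v q)))
      = ∑ k : Fin m, 2 * (y k ℓ * ystar k ℓ) := by
    apply Finset.sum_congr rfl; intro k _
    rw [hc k, hd k]; ring
  rw [hrw]
  rcases Nat.eq_zero_or_pos m with hm | hm
  · subst hm; simp
  · have hm' : (m : ℝ) ≠ 0 := Nat.cast_ne_zero.mpr hm.ne'
    rw [← Finset.mul_sum]
    field_simp
end
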